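/- Let A be an n×n real symmetric matrix, Q an n×n real orthogonal matrix, V the positive-definite square root of I + A², and y₁,…,yₙ independent square-integrable real random variables with common variance σ. Define N_j = Σ_{p=1}^{n} (V*Q)_{j p} · y_p. If σ < |A i j| / (2 + Σ_{k=1}^{n} (A k i)² + Σ_{l=1}^{n} (A l j)²) for a pair of indices i, j with A i j ≠ 0, then Var(N_i) + Var(N_j) < |A i j|. -/

import Mathlib

open Matrix Finset MeasureTheory ProbabilityTheory

lemma variance_linear_comb {n : ℕ} {Ω : Type*} [MeasureSpace Ω]
    [IsProbabilityMeasure (ℙ : Measure Ω)]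
    (y : Fin n → Ω → ℝ) (σ : ℝ)
    (hmeas : ∀ i, Measurable (y i))
    (hL2 : ∀ i, MemLp (y i) 2 ℙ)
    (hindep : iIndepFun y ℙ)
    (hvar : ∀ i, variance (y i) ℙ = σ)
    (c : Fin n → ℝ) :
    variance (fun ω => ∑ p, c p * y p ω) ℙ = σ * ∑ p, (c p) ^ 2 := by
  have h1 : (fun ω => ∑ p, c p * y p ω) = ∑ p, (fun ω => c p * y p ω) := by
    ext ω; simp
  rw [h1, IndepFun.variance_sum]
  · simp_rw [variance_const_mul, hvar]
    rw [mul_sum]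
    exact Finset.sum_congr rfl fun p _ => mul_comm _ _
  · intro p _
    exact (hL2 p).const_mul (c p)
  · intro p _ q _ hpq
    exact (hindep.indepFun hpq).comp (measurable_const_mul (c p))
      (measurable_const_mul (c q))

/-- Corollary 2 of the paper: if the common variance `σ` of the
independent squeezed oscillators satisfies the minimum-squeezing criterion for
an adjacent pair `(i, j)` (i.e. `A i j ≠ 0`), then the variances of the
corresponding nullifiers violate the van Loock–Furusawa separability bound. -/
theorem nullifier_variance_inseparability {n : ℕ} {Ω : Type*} [MeasureSpace Ω]
    [IsProbabilityMeasure (ℙ : Measure Ω)]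
    (A Q V : Matrix (Fin n) (Fin n) ℝ)
    (hA : A.IsSymm)
    (hQ : Q * Qᵀ = 1) (hQ' : Qᵀ * Q = 1)
    (hV : V.PosDef) (hV2 : V * V = 1 + A * A)
    (y : Fin n → Ω → ℝ) (σ : ℝ) (hσ : 0 ≤ σ)
    (hmeas : ∀ i, Measurable (y i))
    (hL2 : ∀ i, MemLp (y i) 2 ℙ)
    (hindep : iIndepFun y ℙ)
    (hvar : ∀ i, variance (y i) ℙ = σ)
    (i j : Fin n) (hadj : A i j ≠ 0)
    (hcrit : σ < |A i j| / (2 + ∑ k, (A k i) ^ 2 + ∑ l, (A l j) ^ 2)) :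
    variance (fun ω => ∑ p, (V * Q) i p * y p ω) ℙ
      + variance (fun ω => ∑ p, (V * Q) j p * y p ω) ℙ < |A i j| := by
  have hVsymm : Vᵀ = V := hV.isHermitian.eq
  have hMM : (V * Q) * (V * Q)ᵀ = 1 + A * A := by
    rw [Matrix.transpose_mul, hVsymm, mul_assoc, ← mul_assoc Q, hQ, one_mul, hV2]
  have hsq : ∀ r : Fin n, ∑ p, ((V * Q) r p) ^ 2 = 1 + ∑ k, (A k r) ^ 2 := by
    intro r
    have := congrArg (fun M => M r r) hMM
    simp only [Matrix.mul_apply, Matrix.transpose_apply, Matrix.add_apply,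
      Matrix.one_apply_eq] at this
    simp_rw [← sq] at this
    simp only [Matrix.mul_apply]
    rw [this]
    congr 1
    refine Finset.sum_congr rfl fun k _ => ?_
    have : A r k = A k r := by
      have := congrArg (fun M => M k r) hA
      simpa [Matrix.transpose_apply] using this
    rw [this, sq]
  rw [variance_linear_comb y σ hmeas hL2 hindep hvar,
      variance_linear_comb y σ hmeas hL2 hindep hvar, hsq, hsq]
  have hD : (0:ℝ) < 2 + ∑ k, (A k i) ^ 2 + ∑ l, (A l j) ^ 2 := by
    have h1 : (0:ℝ) ≤ ∑ k, (A k i) ^ 2 := Finset.sum_nonneg fun k _ => sq_nonneg _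
    have h2 : (0:ℝ) ≤ ∑ l, (A l j) ^ 2 := Finset.sum_nonneg fun l _ => sq_nonneg _
    linarith
  rw [lt_div_iff₀ hD] at hcrit
  nlinarith [hcrit]
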